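/- Let the grid on X, Y be endowed with a unique sink orientation, let i ≥ 1 be an integer, and let u and w be vertices with refined out-degrees (2^{i−1}, 2^{i−1}) and (2^i, 2^i) respectively. Then |Φ(u) ∪ Φ(w)| ≤ 5·2^{i−1}. -/

import Mathlib

open Finset

/-- An assignment of directions to the edges of the grid on `X`, `Y`:
`out u v = true` means the edge between `u` and `v` is directed from `u` to `v`. -/
structure GridOrientation (X Y : Type) where
  out : X × Y → X × Y → Bool

namespace GridOrientation

variable {X Y : Type} [Fintype X] [Fintype Y] [DecidableEq X] [DecidableEq Y]

/-- Two distinct vertices of the grid are adjacent iff they agree in one coordinate. -/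
def Adj (u v : X × Y) : Prop := u ≠ v ∧ (u.1 = v.1 ∨ u.2 = v.2)

/-- `out` is a genuine orientation of the grid: directed edges go along edges of the
grid, and each edge gets exactly one direction. -/
def IsOrientation (o : GridOrientation X Y) : Prop :=
  (∀ u v, o.out u v = true → Adj u v) ∧
  (∀ u v, Adj u v → (o.out u v = true ↔ ¬ o.out v u = true))

/-- `v` is a sink of the face `A × B`. -/
def IsFaceSink (o : GridOrientation X Y) (A : Finset X) (B : Finset Y) (v : X × Y) : Prop :=
  v.1 ∈ A ∧ v.2 ∈ B ∧ ∀ u : X × Y, u.1 ∈ A → u.2 ∈ B → ¬ o.out v u = true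

/-- A unique sink orientation: an orientation such that every nonempty face has a
unique sink. -/
def IsUSO (o : GridOrientation X Y) : Prop :=
  o.IsOrientation ∧
  ∀ (A : Finset X) (B : Finset Y), A.Nonempty → B.Nonempty →
    ∃! v : X × Y, o.IsFaceSink A B v

/-- `Φ_X(v)`. -/
def phiX (o : GridOrientation X Y) (v : X × Y) : Finset X :=
  Finset.univ.filter fun x => o.out v (x, v.2) = true

/-- `Φ_Y(v)`. -/
def phiY (o : GridOrientation X Y) (v : X × Y) : Finset Y :=
  Finset.univ.filter fun y => o.out v (v.1, y) = true

/-- `Φ(v) = Φ_X(v) ∪ Φ_Y(v) ⊆ X ⊔ Y`. -/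
def phi (o : GridOrientation X Y) (v : X × Y) : Finset (X ⊕ Y) :=
  (o.phiX v).disjSum (o.phiY v)

/-- `u →⁺ v`: there is a nonempty directed path from `u` to `v`. -/
def Reaches (o : GridOrientation X Y) (u v : X × Y) : Prop :=
  Relation.TransGen (fun a b => o.out a b = true) u v

/-- A (global) sink: a vertex with no outgoing edge. -/
def IsSink (o : GridOrientation X Y) (v : X × Y) : Prop :=
  ∀ u : X × Y, ¬ o.out v u = true

/-- The out-neighbor `v⟨h⟩` of `v` determined by the pivot `h ∈ X ⊔ Y`. -/
def pivotStep (v : X × Y) : X ⊕ Y → X × Y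
  | Sum.inl x => (x, v.2)
  | Sum.inr y => (v.1, y)

/-- `f` is the expected-hitting-time function of the set `W`: it vanishes on `W` and
satisfies the one-step recurrence off `W`. -/
def IsHittingTimeFun (o : GridOrientation X Y) (W : Set (X × Y)) (f : X × Y → ℝ) : Prop :=
  (∀ v ∈ W, f v = 0) ∧
  ∀ v ∉ W, f v = 1 + (1 / ((o.phi v).card : ℝ)) *
      ∑ u : X × Y, (if o.out v u then f u else 0)

/-- `w` is the `i`-th milestone vertex: for `i = 0` the global sink, for `i ≥ 1` the
vertex of refined out-degree `(2^(i-1), 2^(i-1))`. -/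
def IsMilestone (o : GridOrientation X Y) (i : ℕ) (w : X × Y) : Prop :=
  if i = 0 then o.IsSink w
  else (o.phiX w).card = 2 ^ (i - 1) ∧ (o.phiY w).card = 2 ^ (i - 1)

/-- The milestone set `W^i` associated with the `i`-th milestone vertex `w`. -/
def milestoneSet (o : GridOrientation X Y) (i : ℕ) (w : X × Y) : Set (X × Y) :=
  if i = 0 then {w} else {v | o.Reaches w v}


/-- `p` is below `q` in row `y`: the edge is directed from `(q,y)` to `(p,y)`. -/
abbrev rl (o : GridOrientation X Y) (y : Y) (p q : X) : Prop := o.out (q, y) (p, y) = true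

/-- `p` is below `q` in column `x`. -/
abbrev cl (o : GridOrientation X Y) (x : X) (p q : Y) : Prop := o.out (x, q) (x, p) = true

section
variable {o : GridOrientation X Y}

set_option linter.unusedSectionVars false

lemma out_self (h : o.IsUSO) (v : X × Y) : ¬ o.out v v = true :=
  fun hv => (h.1.1 v v hv).1 rfl

lemma no_rev (h : o.IsUSO) {u v : X × Y} (huv : o.out u v = true) : ¬ o.out v u = true := by
  have adj := h.1.1 u v huv
  have adj' : Adj v u := ⟨fun e => adj.1 e.symm, by rcases adj.2 with e | e; exact Or.inl e.symm; exact Or.inr e.symm⟩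
  exact fun hvu => (h.1.2 v u adj').mp hvu huv

lemma rl_ne (h : o.IsUSO) {y : Y} {p q : X} (hpq : o.rl y p q) : p ≠ q :=
  fun e => out_self h (p, y) (by rw [e] at hpq ⊢; exact hpq)

lemma cl_ne (h : o.IsUSO) {x : X} {p q : Y} (hpq : o.cl x p q) : p ≠ q :=
  fun e => out_self h (x, p) (by rw [e] at hpq ⊢; exact hpq)

lemma rl_total (h : o.IsUSO) {p q : X} (hpq : p ≠ q) (y : Y) : o.rl y p q ∨ o.rl y q p := by
  rcases Classical.em (o.out (q, y) (p, y) = true) with hh | hh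
  · exact Or.inl hh
  · exact Or.inr ((h.1.2 (p, y) (q, y) ⟨by simp [Prod.ext_iff, hpq], Or.inr rfl⟩).mpr hh)

lemma cl_total (h : o.IsUSO) {p q : Y} (hpq : p ≠ q) (x : X) : o.cl x p q ∨ o.cl x q p := by
  rcases Classical.em (o.out (x, q) (x, p) = true) with hh | hh
  · exact Or.inl hh
  · exact Or.inr ((h.1.2 (x, p) (x, q) ⟨by simp [Prod.ext_iff, hpq], Or.inl rfl⟩).mpr hh)

lemma rl_asymm (h : o.IsUSO) {y : Y} {p q : X} (h1 : o.rl y p q) (h2 : o.rl y q p) : False :=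
  no_rev h h1 h2

lemma cl_asymm (h : o.IsUSO) {x : X} {p q : Y} (h1 : o.cl x p q) (h2 : o.cl x q p) : False :=
  no_rev h h1 h2

lemma rl_trans (h : o.IsUSO) {y : Y} {p q r : X} (h1 : o.rl y p q) (h2 : o.rl y q r) :
    o.rl y p r := by
  by_cases hpr : p = r
  · subst hpr; exact absurd h2 (fun h2 => rl_asymm h h1 h2)
  rcases rl_total h hpr y with hh | hh
  · exact hh
  exfalso
  obtain ⟨v, hv, -⟩ := h.2 {p, q, r} {y} ⟨p, by simp⟩ ⟨y, by simp⟩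
  obtain ⟨hv1, hv2, hv3⟩ := hv
  have hvy : v.2 = y := by simpa using hv2
  have hveq : v = (v.1, y) := by rw [← hvy]
  simp only [Finset.mem_insert, Finset.mem_singleton] at hv1
  rcases hv1 with e | e | e
  · exact hv3 (r, y) (by simp) (by simp) (by rw [hveq, e]; exact hh)
  · exact hv3 (p, y) (by simp) (by simp) (by rw [hveq, e]; exact h1)
  · exact hv3 (q, y) (by simp) (by simp) (by rw [hveq, e]; exact h2)

lemma cl_trans (h : o.IsUSO) {x : X} {p q r : Y} (h1 : o.cl x p q) (h2 : o.cl x q r) :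
    o.cl x p r := by
  by_cases hpr : p = r
  · subst hpr; exact absurd h2 (fun h2 => cl_asymm h h1 h2)
  rcases cl_total h hpr x with hh | hh
  · exact hh
  exfalso
  obtain ⟨v, hv, -⟩ := h.2 {x} {p, q, r} ⟨x, by simp⟩ ⟨p, by simp⟩
  obtain ⟨hv1, hv2, hv3⟩ := hv
  have hvx : v.1 = x := by simpa using hv1
  have hveq : v = (x, v.2) := by rw [← hvx]
  simp only [Finset.mem_insert, Finset.mem_singleton] at hv2
  rcases hv2 with e | e | e
  · exact hv3 (x, r) (by simp) (by simp) (by rw [hveq, e]; exact hh)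
  · exact hv3 (x, p) (by simp) (by simp) (by rw [hveq, e]; exact h1)
  · exact hv3 (x, q) (by simp) (by simp) (by rw [hveq, e]; exact h2)

/-- Two opposite sinks in a 2×2 face is impossible. -/
lemma master1 (h : o.IsUSO) {p q : X} {r s : Y} (h1 : o.rl r p q) (h2 : o.rl s q p)
    (h3 : o.cl p r s) (h4 : o.cl q s r) : False := by
  have hpq : p ≠ q := rl_ne h h1
  have hrs : r ≠ s := cl_ne h h3
  obtain ⟨v, -, huniq⟩ := h.2 {p, q} {r, s} ⟨p, by simp⟩ ⟨r, by simp⟩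
  have s1 : o.IsFaceSink {p, q} {r, s} (p, r) := by
    refine ⟨by simp, by simp, ?_⟩
    rintro ⟨ux, uy⟩ hux huy hout
    simp only [Finset.mem_insert, Finset.mem_singleton] at hux huy
    have adj := h.1.1 _ _ hout
    rcases hux with rfl | rfl <;> rcases huy with rfl | rfl
    · exact out_self h _ hout
    · exact no_rev h h3 hout
    · exact no_rev h h1 hout
    · rcases adj.2 with e | e
      · exact hpq e
      · exact hrs e
  have s2 : o.IsFaceSink {p, q} {r, s} (q, s) := by
    refine ⟨by simp, by simp, ?_⟩
    rintro ⟨ux, uy⟩ hux huy hout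
    simp only [Finset.mem_insert, Finset.mem_singleton] at hux huy
    have adj := h.1.1 _ _ hout
    rcases hux with rfl | rfl <;> rcases huy with rfl | rfl
    · rcases adj.2 with e | e
      · exact hpq e.symm
      · exact hrs e.symm
    · exact no_rev h h2 hout
    · exact no_rev h h4 hout
    · exact out_self h _ hout
  have := (huniq _ s1).trans (huniq _ s2).symm
  exact hpq (Prod.ext_iff.mp this).1

/-- A directed 4-cycle in a 2×2 face is impossible. -/
lemma master2 (h : o.IsUSO) {p q : X} {r s : Y} (h1 : o.rl r p q) (h2 : o.rl s q p)
    (h3 : o.cl p s r) (h4 : o.cl q r s) : False := by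
  obtain ⟨v, hv, -⟩ := h.2 {p, q} {r, s} ⟨p, by simp⟩ ⟨r, by simp⟩
  obtain ⟨hv1, hv2, hv3⟩ := hv
  have hveq : v = (v.1, v.2) := rfl
  simp only [Finset.mem_insert, Finset.mem_singleton] at hv1 hv2
  rcases hv1 with e1 | e1 <;> rcases hv2 with e2 | e2
  · exact hv3 (p, s) (by simp) (by simp) (by rw [hveq, e1, e2]; exact h3)
  · exact hv3 (q, s) (by simp) (by simp) (by rw [hveq, e1, e2]; exact h2)
  · exact hv3 (p, r) (by simp) (by simp) (by rw [hveq, e1, e2]; exact h1)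
  · exact hv3 (q, r) (by simp) (by simp) (by rw [hveq, e1, e2]; exact h4)

end
section
variable {o : GridOrientation X Y}
set_option linter.unusedSectionVars false
set_option linter.unusedVariables false
set_option maxHeartbeats 1000000

lemma core_0 (h : o.IsUSO) {a c x1 x2 : X} {b d y1 y2 : Y}
    (hne_a_c : a ≠ c) (hne_a_x1 : a ≠ x1) (hne_a_x2 : a ≠ x2) (hne_c_x1 : c ≠ x1) (hne_c_x2 : c ≠ x2) (hne_x1_x2 : x1 ≠ x2) (hne_b_d : b ≠ d) (hne_b_y1 : b ≠ y1) (hne_b_y2 : b ≠ y2) (hne_d_y1 : d ≠ y1) (hne_d_y2 : d ≠ y2) (hne_y1_y2 : y1 ≠ y2)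
    (f1 : o.rl b x1 a) (f2 : o.rl d c x1) (f3 : o.rl d x2 c) (f4 : o.rl b a x2) (f5 : o.cl a y1 b) (f6 : o.cl c d y1) (f7 : o.cl c y2 d) (f8 : o.cl a b y2) : False := by
  have H1 : o.rl b x1 x2 := rl_trans h f1 f4
  have H2 : o.rl d x2 x1 := rl_trans h f3 f2
  have H3 : o.cl a y1 y2 := cl_trans h f5 f8
  have H4 : o.cl c y2 y1 := cl_trans h f7 f6
  rcases rl_total h hne_a_c b with H29 | H29
  ·
    have H30 : o.rl b x1 c := rl_trans h f1 H29
    rcases rl_total h hne_a_c d with H49 | H49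
    ·
      have H50 : o.rl d a x1 := rl_trans h H49 f2
      rcases cl_total h hne_b_d a with H63 | H63
      ·
        have H64 : o.cl a y1 d := cl_trans h f5 H63
        rcases rl_total h hne_a_c y1 with H71 | H71
        ·
          rcases rl_total h hne_a_c y2 with H82 | H82
          ·
            rcases cl_total h hne_b_d x1 with H97 | H97
            ·
              rcases cl_total h hne_b_d c with H116 | H116
              ·
                have H117 : o.cl c b y1 := cl_trans h H116 f6
                rcases cl_total h hne_b_d x2 with H130 | H130
                ·
                  rcases rl_total h hne_a_x1 y1 with H147 | H147
                  ·
                    rcases cl_total h hne_b_y1 x1 with H164 | H164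
                    ·
                      exact master1 h f1 H147 H164 f5
                    ·
                      have H165 : o.cl x1 y1 d := cl_trans h H164 H97
                      rcases rl_total h hne_c_x1 y1 with H184 | H184
                      ·
                        exact master2 h H30 H184 H164 H117
                      ·
                        exact master1 h f2 H184 f6 H165
                  ·
                    have H185 : o.rl y1 x1 c := rl_trans h H147 H71
                    rcases cl_total h hne_d_y1 x1 with H204 | H204
                    ·
                      have H205 : o.cl x1 b y1 := cl_trans h H97 H204
                      exact master2 h H50 H147 H64 H204
                    ·
                      exact master1 h f2 H185 f6 H204
                ·
                  exact master1 h H1 H2 H97 H130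
              ·
                have H206 : o.cl c y2 b := cl_trans h f7 H116
                exact master1 h H30 f2 H97 H116
            ·
              exact master2 h f1 H50 H97 H63
          ·
            exact master1 h H71 H82 H3 H4
        ·
          exact master2 h H49 H71 H64 f6
      ·
        have H207 : o.cl a d y2 := cl_trans h H63 f8
        rcases rl_total h hne_a_c y2 with H214 | H214
        ·
          rcases rl_total h hne_a_c y1 with H225 | H225
          ·
            rcases cl_total h hne_b_d x1 with H240 | H240
            ·
              exact master1 h f1 H50 H240 H63
            ·
              rcases cl_total h hne_b_d c with H259 | H259
              ·
                have H260 : o.cl c b y1 := cl_trans h H259 f6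
                exact master2 h H30 f2 H240 H259
              ·
                have H261 : o.cl c y2 b := cl_trans h f7 H259
                rcases cl_total h hne_b_d x2 with H274 | H274
                ·
                  exact master2 h H1 H2 H240 H274
                ·
                  rcases rl_total h hne_a_x1 y1 with H291 | H291
                  ·
                    rcases cl_total h hne_b_y1 x1 with H308 | H308
                    ·
                      have H309 : o.cl x1 d y1 := cl_trans h H240 H308
                      exact master1 h f1 H291 H308 f5
                    ·
                      rcases rl_total h hne_a_x2 y1 with H326 | H326
                      ·
                        rcases cl_total h hne_b_y2 x1 with H339 | H339
                        ·
                          have H340 : o.cl x1 d y2 := cl_trans h H240 H339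
                          have H341 : o.cl x1 y1 y2 := cl_trans h H308 H339
                          rcases rl_total h hne_c_x1 y2 with H350 | H350
                          ·
                            have H351 : o.rl y2 a x1 := rl_trans h H214 H350
                            exact master1 h H30 H350 H339 H261
                          ·
                            exact master2 h f2 H350 f7 H340
                        ·
                          rcases rl_total h hne_a_x1 y2 with H360 | H360
                          ·
                            exact master2 h f1 H360 H339 f8
                          ·
                            have H361 : o.rl y2 x1 c := rl_trans h H360 H214
                            rcases cl_total h hne_d_y2 x1 with H372 | H372
                            ·
                              exact master2 h f2 H361 f7 H372
                            ·
                              exact master1 h H50 H360 H207 H372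
                      ·
                        have H373 : o.rl y1 x2 c := rl_trans h H326 H225
                        have H374 : o.rl y1 x2 x1 := rl_trans h H326 H291
                        rcases cl_total h hne_b_y1 x2 with H387 | H387
                        ·
                          have H388 : o.cl x2 d y1 := cl_trans h H274 H387
                          exact master2 h f4 H326 f5 H387
                        ·
                          rcases cl_total h hne_b_y2 x1 with H401 | H401
                          ·
                            have H402 : o.cl x1 d y2 := cl_trans h H240 H401
                            have H403 : o.cl x1 y1 y2 := cl_trans h H308 H401
                            rcases rl_total h hne_c_x1 y2 with H412 | H412
                            ·
                              have H413 : o.rl y2 a x1 := rl_trans h H214 H412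
                              exact master1 h H30 H412 H401 H261
                            ·
                              exact master2 h f2 H412 f7 H402
                          ·
                            rcases rl_total h hne_a_x1 y2 with H422 | H422
                            ·
                              exact master2 h f1 H422 H401 f8
                            ·
                              have H423 : o.rl y2 x1 c := rl_trans h H422 H214
                              rcases cl_total h hne_d_y2 x1 with H434 | H434
                              ·
                                exact master2 h f2 H423 f7 H434
                              ·
                                exact master1 h H50 H422 H207 H434
                  ·
                    have H435 : o.rl y1 x1 c := rl_trans h H291 H225
                    rcases cl_total h hne_d_y1 x1 with H454 | H454
                    ·
                      rcases cl_total h hne_d_y1 a with H473 | H473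
                      ·
                        rcases rl_total h hne_a_x2 y1 with H492 | H492
                        ·
                          have H493 : o.rl y1 x1 x2 := rl_trans h H291 H492
                          rcases cl_total h hne_d_y1 x2 with H506 | H506
                          ·
                            rcases cl_total h hne_d_y2 x1 with H519 | H519
                            ·
                              rcases rl_total h hne_c_x1 y2 with H528 | H528
                              ·
                                have H529 : o.rl y2 a x1 := rl_trans h H214 H528
                                rcases cl_total h hne_b_y2 x1 with H540 | H540
                                ·
                                  exact master1 h H30 H528 H540 H261
                                ·
                                  exact master2 h f1 H529 H540 f8
                              ·
                                exact master2 h f2 H528 f7 H519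
                            ·
                              have H541 : o.cl x1 y2 b := cl_trans h H519 H240
                              have H542 : o.cl x1 y2 y1 := cl_trans h H519 H454
                              rcases rl_total h hne_a_x1 y2 with H551 | H551
                              ·
                                exact master2 h f1 H551 H541 f8
                              ·
                                have H552 : o.rl y2 x1 c := rl_trans h H551 H214
                                exact master1 h H50 H551 H207 H519
                          ·
                            have H553 : o.cl x2 y1 b := cl_trans h H506 H274
                            exact master2 h H2 H493 H506 H454
                        ·
                          have H554 : o.rl y1 x2 c := rl_trans h H492 H225
                          rcases cl_total h hne_b_y1 x2 with H567 | H567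
                          ·
                            have H568 : o.cl x2 d y1 := cl_trans h H274 H567
                            exact master2 h f4 H492 f5 H567
                          ·
                            rcases cl_total h hne_d_y2 x1 with H581 | H581
                            ·
                              rcases rl_total h hne_c_x1 y2 with H590 | H590
                              ·
                                have H591 : o.rl y2 a x1 := rl_trans h H214 H590
                                rcases cl_total h hne_b_y2 x1 with H602 | H602
                                ·
                                  exact master1 h H30 H590 H602 H261
                                ·
                                  exact master2 h f1 H591 H602 f8
                              ·
                                exact master2 h f2 H590 f7 H581
                            ·
                              have H603 : o.cl x1 y2 b := cl_trans h H581 H240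
                              have H604 : o.cl x1 y2 y1 := cl_trans h H581 H454
                              rcases rl_total h hne_a_x1 y2 with H613 | H613
                              ·
                                exact master2 h f1 H613 H603 f8
                              ·
                                have H614 : o.rl y2 x1 c := rl_trans h H613 H214
                                exact master1 h H50 H613 H207 H581
                      ·
                        exact master2 h H50 H291 H473 H454
                    ·
                      have H615 : o.cl x1 y1 b := cl_trans h H454 H240
                      exact master1 h f2 H435 f6 H454
          ·
            exact master2 h H225 H214 H4 H3
        ·
          exact master1 h H49 H214 H207 f7
    ·
      have H616 : o.rl d x2 a := rl_trans h f3 H49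
      rcases cl_total h hne_b_d a with H629 | H629
      ·
        have H630 : o.cl a y1 d := cl_trans h f5 H629
        rcases cl_total h hne_b_d c with H637 | H637
        ·
          have H638 : o.cl c b y1 := cl_trans h H637 f6
          rcases rl_total h hne_a_c y1 with H639 | H639
          ·
            exact master1 h H49 H639 f6 H630
          ·
            exact master2 h H29 H639 f5 H638
        ·
          have H640 : o.cl c y2 b := cl_trans h f7 H637
          exact master1 h H29 H49 H629 H637
      ·
        have H641 : o.cl a d y2 := cl_trans h H629 f8
        rcases cl_total h hne_b_d c with H648 | H648
        ·
          have H649 : o.cl c b y1 := cl_trans h H648 f6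
          exact master2 h H29 H49 H629 H648
        ·
          have H650 : o.cl c y2 b := cl_trans h f7 H648
          rcases rl_total h hne_a_c y2 with H651 | H651
          ·
            exact master2 h H49 H651 f7 H641
          ·
            exact master1 h H29 H651 f8 H650
  ·
    have H652 : o.rl b c x2 := rl_trans h H29 f4
    rcases rl_total h hne_a_c d with H671 | H671
    ·
      have H672 : o.rl d a x1 := rl_trans h H671 f2
      rcases cl_total h hne_b_d a with H685 | H685
      ·
        have H686 : o.cl a y1 d := cl_trans h f5 H685
        rcases cl_total h hne_b_d c with H693 | H693
        ·
          have H694 : o.cl c b y1 := cl_trans h H693 f6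
          rcases rl_total h hne_a_c y1 with H695 | H695
          ·
            exact master1 h H29 H695 H694 f5
          ·
            exact master2 h H671 H695 H686 f6
        ·
          have H696 : o.cl c y2 b := cl_trans h f7 H693
          exact master2 h H29 H671 H693 H685
      ·
        have H697 : o.cl a d y2 := cl_trans h H685 f8
        rcases cl_total h hne_b_d c with H704 | H704
        ·
          have H705 : o.cl c b y1 := cl_trans h H704 f6
          exact master1 h H29 H671 H704 H685
        ·
          have H706 : o.cl c y2 b := cl_trans h f7 H704
          rcases rl_total h hne_a_c y2 with H707 | H707
          ·
            exact master2 h H29 H707 H706 f8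
          ·
            exact master1 h H671 H707 H697 f7
    ·
      have H708 : o.rl d x2 a := rl_trans h f3 H671
      rcases cl_total h hne_b_d a with H721 | H721
      ·
        have H722 : o.cl a y1 d := cl_trans h f5 H721
        rcases rl_total h hne_a_c y1 with H729 | H729
        ·
          exact master1 h H671 H729 f6 H722
        ·
          rcases rl_total h hne_a_c y2 with H740 | H740
          ·
            exact master2 h H729 H740 H4 H3
          ·
            rcases cl_total h hne_b_d x2 with H755 | H755
            ·
              rcases cl_total h hne_b_d c with H774 | H774
              ·
                have H775 : o.cl c b y1 := cl_trans h H774 f6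
                rcases cl_total h hne_b_d x1 with H788 | H788
                ·
                  rcases rl_total h hne_a_x1 y1 with H805 | H805
                  ·
                    have H806 : o.rl y1 c x1 := rl_trans h H729 H805
                    rcases cl_total h hne_b_y1 x1 with H825 | H825
                    ·
                      exact master1 h f1 H805 H825 f5
                    ·
                      have H826 : o.cl x1 y1 d := cl_trans h H825 H788
                      rcases rl_total h hne_c_x1 b with H847 | H847
                      ·
                        rcases rl_total h hne_a_x2 y1 with H868 | H868
                        ·
                          have H869 : o.rl y1 c x2 := rl_trans h H729 H868
                          rcases cl_total h hne_d_y1 x2 with H884 | H884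
                          ·
                            have H885 : o.cl x2 b y1 := cl_trans h H755 H884
                            exact master1 h H708 H868 H884 H722
                          ·
                            exact master2 h f3 H869 H884 f6
                        ·
                          have H886 : o.rl y1 x2 x1 := rl_trans h H868 H805
                          rcases cl_total h hne_b_y1 x2 with H901 | H901
                          ·
                            exact master2 h f4 H868 f5 H901
                          ·
                            have H902 : o.cl x2 y1 d := cl_trans h H901 H755
                            rcases rl_total h hne_c_x2 y1 with H919 | H919
                            ·
                              exact master2 h f3 H919 H902 f6
                            ·
                              exact master1 h H652 H919 H775 H901
                      ·
                        exact master2 h H847 H806 H825 H775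
                  ·
                    rcases rl_total h hne_a_x2 y1 with H936 | H936
                    ·
                      have H937 : o.rl y1 c x2 := rl_trans h H729 H936
                      have H938 : o.rl y1 x1 x2 := rl_trans h H805 H936
                      rcases cl_total h hne_d_y1 x2 with H951 | H951
                      ·
                        have H952 : o.cl x2 b y1 := cl_trans h H755 H951
                        exact master1 h H708 H936 H951 H722
                      ·
                        exact master2 h f3 H937 H951 f6
                    ·
                      rcases cl_total h hne_b_y1 x2 with H965 | H965
                      ·
                        exact master2 h f4 H936 f5 H965
                      ·
                        have H966 : o.cl x2 y1 d := cl_trans h H965 H755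
                        rcases rl_total h hne_c_x2 y1 with H981 | H981
                        ·
                          exact master2 h f3 H981 H966 f6
                        ·
                          exact master1 h H652 H981 H775 H965
                ·
                  exact master2 h H1 H2 H788 H755
              ·
                have H982 : o.cl c y2 b := cl_trans h f7 H774
                exact master2 h H652 f3 H774 H755
            ·
              exact master1 h f4 H708 H721 H755
      ·
        have H983 : o.cl a d y2 := cl_trans h H721 f8
        rcases rl_total h hne_a_c y2 with H990 | H990
        ·
          exact master2 h H671 H990 f7 H983
        ·
          rcases rl_total h hne_a_c y1 with H1001 | H1001
          ·
            exact master1 h H1001 H990 H3 H4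
          ·
            rcases cl_total h hne_b_d x2 with H1016 | H1016
            ·
              exact master2 h f4 H708 H721 H1016
            ·
              rcases cl_total h hne_b_d c with H1035 | H1035
              ·
                have H1036 : o.cl c b y1 := cl_trans h H1035 f6
                exact master1 h H652 f3 H1035 H1016
              ·
                have H1037 : o.cl c y2 b := cl_trans h f7 H1035
                rcases cl_total h hne_b_d x1 with H1050 | H1050
                ·
                  exact master1 h H1 H2 H1050 H1016
                ·
                  rcases rl_total h hne_a_x1 y1 with H1067 | H1067
                  ·
                    have H1068 : o.rl y1 c x1 := rl_trans h H1001 H1067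
                    rcases cl_total h hne_b_y1 x1 with H1087 | H1087
                    ·
                      have H1088 : o.cl x1 d y1 := cl_trans h H1050 H1087
                      exact master1 h f1 H1067 H1087 f5
                    ·
                      rcases rl_total h hne_a_x2 y1 with H1107 | H1107
                      ·
                        have H1108 : o.rl y1 c x2 := rl_trans h H1001 H1107
                        rcases cl_total h hne_d_y1 x2 with H1121 | H1121
                        ·
                          rcases cl_total h hne_d_y1 a with H1134 | H1134
                          ·
                            rcases cl_total h hne_b_y2 x1 with H1147 | H1147
                            ·
                              have H1148 : o.cl x1 d y2 := cl_trans h H1050 H1147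
                              have H1149 : o.cl x1 y1 y2 := cl_trans h H1087 H1147
                              rcases rl_total h hne_c_x1 y2 with H1158 | H1158
                              ·
                                rcases rl_total h hne_c_x1 b with H1167 | H1167
                                ·
                                  rcases rl_total h hne_c_x2 y2 with H1176 | H1176
                                  ·
                                    rcases cl_total h hne_d_y2 x2 with H1181 | H1181
                                    ·
                                      exact master1 h f3 H1176 H1181 f7
                                    ·
                                      have H1182 : o.cl x2 y2 b := cl_trans h H1181 H1016
                                      have H1183 : o.cl x2 y2 y1 := cl_trans h H1181 H1121
                                      rcases rl_total h hne_a_x2 y2 with H1184 | H1184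
                                      ·
                                        exact master2 h H708 H1184 H1181 H983
                                      ·
                                        exact master1 h f4 H1184 f8 H1182
                                  ·
                                    have H1185 : o.rl y2 x2 a := rl_trans h H1176 H990
                                    have H1186 : o.rl y2 x2 x1 := rl_trans h H1176 H1158
                                    rcases cl_total h hne_b_y2 x2 with H1191 | H1191
                                    ·
                                      have H1192 : o.cl x2 d y2 := cl_trans h H1016 H1191
                                      exact master2 h H652 H1176 H1037 H1191
                                    ·
                                      exact master1 h f4 H1185 f8 H1191
                                ·
                                  exact master1 h H1167 H1158 H1147 H1037
                              ·
                                have H1193 : o.rl y2 x1 a := rl_trans h H1158 H990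
                                exact master2 h f2 H1158 f7 H1148
                            ·
                              rcases rl_total h hne_a_x1 y2 with H1202 | H1202
                              ·
                                have H1203 : o.rl y2 c x1 := rl_trans h H990 H1202
                                exact master2 h f1 H1202 H1147 f8
                              ·
                                rcases cl_total h hne_y1_y2 x1 with H1212 | H1212
                                ·
                                  rcases rl_total h hne_c_x1 y2 with H1223 | H1223
                                  ·
                                    rcases rl_total h hne_a_x2 y2 with H1236 | H1236
                                    ·
                                      have H1237 : o.rl y2 c x2 := rl_trans h H990 H1236
                                      have H1238 : o.rl y2 x1 x2 := rl_trans h H1202 H1236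
                                      rcases cl_total h hne_d_y2 x2 with H1245 | H1245
                                      ·
                                        exact master1 h f3 H1237 H1245 f7
                                      ·
                                        have H1246 : o.cl x2 y2 b := cl_trans h H1245 H1016
                                        have H1247 : o.cl x2 y2 y1 := cl_trans h H1245 H1121
                                        exact master2 h H708 H1236 H1245 H983
                                    ·
                                      rcases cl_total h hne_b_y2 x2 with H1256 | H1256
                                      ·
                                        have H1257 : o.cl x2 d y2 := cl_trans h H1016 H1256
                                        rcases rl_total h hne_c_x2 y2 with H1264 | H1264
                                        ·
                                          exact master1 h f3 H1264 H1257 f7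
                                        ·
                                          have H1265 : o.rl y2 x2 x1 := rl_trans h H1264 H1223
                                          exact master2 h H652 H1264 H1037 H1256
                                      ·
                                        exact master1 h f4 H1236 f8 H1256
                                  ·
                                    exact master2 h H1068 H1223 H4 H1212
                                ·
                                  exact master1 h H1067 H1202 H3 H1212
                          ·
                            exact master1 h H708 H1107 H1121 H1134
                        ·
                          have H1266 : o.cl x2 y1 b := cl_trans h H1121 H1016
                          exact master2 h f3 H1108 H1121 f6
                      ·
                        have H1267 : o.rl y1 x2 x1 := rl_trans h H1107 H1067
                        rcases cl_total h hne_b_y1 x2 with H1280 | H1280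
                        ·
                          have H1281 : o.cl x2 d y1 := cl_trans h H1016 H1280
                          exact master2 h f4 H1107 f5 H1280
                        ·
                          rcases cl_total h hne_b_y2 x1 with H1294 | H1294
                          ·
                            have H1295 : o.cl x1 d y2 := cl_trans h H1050 H1294
                            have H1296 : o.cl x1 y1 y2 := cl_trans h H1087 H1294
                            rcases rl_total h hne_c_x1 y2 with H1305 | H1305
                            ·
                              rcases rl_total h hne_c_x1 b with H1314 | H1314
                              ·
                                rcases rl_total h hne_c_x2 y2 with H1323 | H1323
                                ·
                                  rcases cl_total h hne_d_y2 x2 with H1328 | H1328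
                                  ·
                                    exact master1 h f3 H1323 H1328 f7
                                  ·
                                    have H1329 : o.cl x2 y2 b := cl_trans h H1328 H1016
                                    rcases rl_total h hne_a_x2 y2 with H1332 | H1332
                                    ·
                                      exact master2 h H708 H1332 H1328 H983
                                    ·
                                      exact master1 h f4 H1332 f8 H1329
                                ·
                                  have H1333 : o.rl y2 x2 a := rl_trans h H1323 H990
                                  have H1334 : o.rl y2 x2 x1 := rl_trans h H1323 H1305
                                  rcases cl_total h hne_b_y2 x2 with H1339 | H1339
                                  ·
                                    have H1340 : o.cl x2 d y2 := cl_trans h H1016 H1339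
                                    have H1341 : o.cl x2 y1 y2 := cl_trans h H1280 H1339
                                    exact master2 h H652 H1323 H1037 H1339
                                  ·
                                    exact master1 h f4 H1333 f8 H1339
                              ·
                                exact master1 h H1314 H1305 H1294 H1037
                            ·
                              have H1342 : o.rl y2 x1 a := rl_trans h H1305 H990
                              exact master2 h f2 H1305 f7 H1295
                          ·
                            rcases rl_total h hne_a_x1 y2 with H1351 | H1351
                            ·
                              have H1352 : o.rl y2 c x1 := rl_trans h H990 H1351
                              exact master2 h f1 H1351 H1294 f8
                            ·
                              rcases cl_total h hne_y1_y2 x1 with H1361 | H1361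
                              ·
                                rcases rl_total h hne_c_x1 y2 with H1372 | H1372
                                ·
                                  rcases rl_total h hne_a_x2 y2 with H1385 | H1385
                                  ·
                                    have H1386 : o.rl y2 c x2 := rl_trans h H990 H1385
                                    have H1387 : o.rl y2 x1 x2 := rl_trans h H1351 H1385
                                    rcases cl_total h hne_d_y2 x2 with H1394 | H1394
                                    ·
                                      exact master1 h f3 H1386 H1394 f7
                                    ·
                                      have H1395 : o.cl x2 y2 b := cl_trans h H1394 H1016
                                      exact master2 h H708 H1385 H1394 H983
                                  ·
                                    rcases cl_total h hne_b_y2 x2 with H1404 | H1404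
                                    ·
                                      have H1405 : o.cl x2 d y2 := cl_trans h H1016 H1404
                                      have H1406 : o.cl x2 y1 y2 := cl_trans h H1280 H1404
                                      rcases rl_total h hne_c_x2 y2 with H1411 | H1411
                                      ·
                                        exact master1 h f3 H1411 H1405 f7
                                      ·
                                        have H1412 : o.rl y2 x2 x1 := rl_trans h H1411 H1372
                                        exact master2 h H652 H1411 H1037 H1404
                                    ·
                                      exact master1 h f4 H1385 f8 H1404
                                ·
                                  exact master2 h H1068 H1372 H4 H1361
                              ·
                                exact master1 h H1067 H1351 H3 H1361
                  ·
                    rcases rl_total h hne_a_x2 y1 with H1429 | H1429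
                    ·
                      have H1430 : o.rl y1 c x2 := rl_trans h H1001 H1429
                      have H1431 : o.rl y1 x1 x2 := rl_trans h H1067 H1429
                      rcases cl_total h hne_d_y1 x2 with H1444 | H1444
                      ·
                        rcases cl_total h hne_d_y1 a with H1457 | H1457
                        ·
                          rcases cl_total h hne_d_y1 x1 with H1470 | H1470
                          ·
                            rcases cl_total h hne_d_y2 x1 with H1483 | H1483
                            ·
                              rcases rl_total h hne_c_x1 y2 with H1492 | H1492
                              ·
                                rcases rl_total h hne_c_x2 y2 with H1501 | H1501
                                ·
                                  rcases cl_total h hne_d_y2 x2 with H1506 | H1506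
                                  ·
                                    exact master1 h f3 H1501 H1506 f7
                                  ·
                                    have H1507 : o.cl x2 y2 b := cl_trans h H1506 H1016
                                    have H1508 : o.cl x2 y2 y1 := cl_trans h H1506 H1444
                                    rcases rl_total h hne_a_x2 y2 with H1509 | H1509
                                    ·
                                      exact master2 h H708 H1509 H1506 H983
                                    ·
                                      exact master1 h f4 H1509 f8 H1507
                                ·
                                  have H1510 : o.rl y2 x2 a := rl_trans h H1501 H990
                                  have H1511 : o.rl y2 x2 x1 := rl_trans h H1501 H1492
                                  rcases cl_total h hne_b_y2 x2 with H1516 | H1516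
                                  ·
                                    have H1517 : o.cl x2 d y2 := cl_trans h H1016 H1516
                                    exact master2 h H652 H1501 H1037 H1516
                                  ·
                                    exact master1 h f4 H1510 f8 H1516
                              ·
                                have H1518 : o.rl y2 x1 a := rl_trans h H1492 H990
                                exact master2 h f2 H1492 f7 H1483
                            ·
                              have H1519 : o.cl x1 y2 b := cl_trans h H1483 H1050
                              have H1520 : o.cl x1 y2 y1 := cl_trans h H1483 H1470
                              rcases rl_total h hne_a_x1 y2 with H1529 | H1529
                              ·
                                have H1530 : o.rl y2 c x1 := rl_trans h H990 H1529
                                exact master2 h f1 H1529 H1519 f8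
                              ·
                                rcases rl_total h hne_a_x1 d with H1539 | H1539
                                ·
                                  exact master1 h H1539 H1529 H983 H1483
                                ·
                                  rcases rl_total h hne_a_x2 y2 with H1548 | H1548
                                  ·
                                    have H1549 : o.rl y2 c x2 := rl_trans h H990 H1548
                                    have H1550 : o.rl y2 x1 x2 := rl_trans h H1529 H1548
                                    rcases cl_total h hne_d_y2 x2 with H1555 | H1555
                                    ·
                                      exact master1 h f3 H1549 H1555 f7
                                    ·
                                      have H1556 : o.cl x2 y2 b := cl_trans h H1555 H1016
                                      have H1557 : o.cl x2 y2 y1 := cl_trans h H1555 H1444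
                                      exact master2 h H708 H1548 H1555 H983
                                  ·
                                    rcases cl_total h hne_b_y2 x2 with H1562 | H1562
                                    ·
                                      have H1563 : o.cl x2 d y2 := cl_trans h H1016 H1562
                                      rcases rl_total h hne_c_x2 y2 with H1566 | H1566
                                      ·
                                        exact master1 h f3 H1566 H1563 f7
                                      ·
                                        exact master2 h H652 H1566 H1037 H1562
                                    ·
                                      exact master1 h f4 H1548 f8 H1562
                          ·
                            have H1567 : o.cl x1 y1 b := cl_trans h H1470 H1050
                            exact master1 h H2 H1431 H1444 H1470
                        ·
                          exact master1 h H708 H1429 H1444 H1457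
                      ·
                        have H1568 : o.cl x2 y1 b := cl_trans h H1444 H1016
                        exact master2 h f3 H1430 H1444 f6
                    ·
                      rcases cl_total h hne_b_y1 x2 with H1581 | H1581
                      ·
                        have H1582 : o.cl x2 d y1 := cl_trans h H1016 H1581
                        exact master2 h f4 H1429 f5 H1581
                      ·
                        rcases cl_total h hne_b_y2 x2 with H1595 | H1595
                        ·
                          have H1596 : o.cl x2 d y2 := cl_trans h H1016 H1595
                          have H1597 : o.cl x2 y1 y2 := cl_trans h H1581 H1595
                          rcases rl_total h hne_c_x2 y2 with H1606 | H1606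
                          ·
                            exact master1 h f3 H1606 H1596 f7
                          ·
                            have H1607 : o.rl y2 x2 a := rl_trans h H1606 H990
                            exact master2 h H652 H1606 H1037 H1595
                        ·
                          rcases rl_total h hne_a_x2 y2 with H1616 | H1616
                          ·
                            have H1617 : o.rl y2 c x2 := rl_trans h H990 H1616
                            rcases cl_total h hne_d_y2 x2 with H1628 | H1628
                            ·
                              exact master1 h f3 H1617 H1628 f7
                            ·
                              exact master2 h H708 H1616 H1628 H983
                          ·
                            exact master1 h f4 H1616 f8 H1595

lemma core_1 (h : o.IsUSO) {a c x2 : X} {b d y1 y2 : Y}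
    (hne_a_c : a ≠ c) (hne_a_x2 : a ≠ x2) (hne_c_x2 : c ≠ x2) (hne_b_d : b ≠ d) (hne_b_y1 : b ≠ y1) (hne_b_y2 : b ≠ y2) (hne_d_y1 : d ≠ y1) (hne_d_y2 : d ≠ y2) (hne_y1_y2 : y1 ≠ y2)
    (f1 : o.rl b c a) (f2 : o.rl d x2 c) (f3 : o.rl b a x2) (f4 : o.cl a y1 b) (f5 : o.cl c d y1) (f6 : o.cl c y2 d) (f7 : o.cl a b y2) : False := by
  have H1 : o.rl b c x2 := rl_trans h f1 f3
  have H2 : o.cl a y1 y2 := cl_trans h f4 f7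
  have H3 : o.cl c y2 y1 := cl_trans h f6 f5
  rcases cl_total h hne_b_d a with H18 | H18
  ·
    have H19 : o.cl a y1 d := cl_trans h f4 H18
    rcases cl_total h hne_b_d c with H28 | H28
    ·
      have H29 : o.cl c b y1 := cl_trans h H28 f5
      rcases rl_total h hne_a_c y1 with H32 | H32
      ·
        exact master1 h f1 H32 H29 f4
      ·
        rcases rl_total h hne_a_c d with H37 | H37
        ·
          exact master2 h H37 H32 H19 f5
        ·
          have H38 : o.rl d x2 a := rl_trans h f2 H37
          rcases rl_total h hne_a_c y2 with H41 | H41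
          ·
            exact master2 h H32 H41 H3 H2
          ·
            rcases cl_total h hne_b_d x2 with H46 | H46
            ·
              rcases rl_total h hne_a_x2 y1 with H55 | H55
              ·
                have H56 : o.rl y1 c x2 := rl_trans h H32 H55
                rcases cl_total h hne_d_y1 x2 with H63 | H63
                ·
                  have H64 : o.cl x2 b y1 := cl_trans h H46 H63
                  exact master1 h H38 H55 H63 H19
                ·
                  exact master2 h f2 H56 H63 f5
              ·
                rcases cl_total h hne_b_y1 x2 with H71 | H71
                ·
                  exact master2 h f3 H55 f4 H71
                ·
                  have H72 : o.cl x2 y1 d := cl_trans h H71 H46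
                  rcases rl_total h hne_c_x2 y1 with H81 | H81
                  ·
                    exact master2 h f2 H81 H72 f5
                  ·
                    exact master1 h H1 H81 H29 H71
            ·
              exact master1 h f3 H38 H18 H46
    ·
      have H82 : o.cl c y2 b := cl_trans h f6 H28
      rcases rl_total h hne_a_c d with H85 | H85
      ·
        exact master2 h f1 H85 H28 H18
      ·
        have H86 : o.rl d x2 a := rl_trans h f2 H85
        rcases cl_total h hne_b_d x2 with H87 | H87
        ·
          exact master2 h H1 f2 H28 H87
        ·
          exact master1 h f3 H86 H18 H87
  ·
    have H88 : o.cl a d y2 := cl_trans h H18 f7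
    rcases cl_total h hne_b_d c with H97 | H97
    ·
      have H98 : o.cl c b y1 := cl_trans h H97 f5
      rcases rl_total h hne_a_c d with H101 | H101
      ·
        exact master1 h f1 H101 H97 H18
      ·
        have H102 : o.rl d x2 a := rl_trans h f2 H101
        rcases cl_total h hne_b_d x2 with H103 | H103
        ·
          exact master2 h f3 H102 H18 H103
        ·
          exact master1 h H1 f2 H97 H103
    ·
      have H104 : o.cl c y2 b := cl_trans h f6 H97
      rcases rl_total h hne_a_c y2 with H107 | H107
      ·
        exact master2 h f1 H107 H104 f7
      ·
        rcases rl_total h hne_a_c d with H112 | H112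
        ·
          exact master1 h H112 H107 H88 f6
        ·
          have H113 : o.rl d x2 a := rl_trans h f2 H112
          rcases rl_total h hne_a_c y1 with H116 | H116
          ·
            exact master1 h H116 H107 H2 H3
          ·
            rcases cl_total h hne_b_d x2 with H121 | H121
            ·
              exact master2 h f3 H113 H18 H121
            ·
              rcases rl_total h hne_a_x2 y1 with H130 | H130
              ·
                have H131 : o.rl y1 c x2 := rl_trans h H116 H130
                rcases cl_total h hne_d_y1 x2 with H138 | H138
                ·
                  rcases cl_total h hne_d_y1 a with H145 | H145
                  ·
                    rcases cl_total h hne_d_y2 x2 with H152 | H152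
                    ·
                      rcases rl_total h hne_c_x2 y2 with H155 | H155
                      ·
                        exact master1 h f2 H155 H152 f6
                      ·
                        have H156 : o.rl y2 x2 a := rl_trans h H155 H107
                        rcases cl_total h hne_b_y2 x2 with H157 | H157
                        ·
                          exact master2 h H1 H155 H104 H157
                        ·
                          exact master1 h f3 H156 f7 H157
                    ·
                      have H158 : o.cl x2 y2 b := cl_trans h H152 H121
                      have H159 : o.cl x2 y2 y1 := cl_trans h H152 H138
                      rcases rl_total h hne_a_x2 y2 with H162 | H162
                      ·
                        have H163 : o.rl y2 c x2 := rl_trans h H107 H162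
                        exact master2 h H113 H162 H152 H88
                      ·
                        exact master1 h f3 H162 f7 H158
                  ·
                    exact master1 h H113 H130 H138 H145
                ·
                  have H164 : o.cl x2 y1 b := cl_trans h H138 H121
                  exact master2 h f2 H131 H138 f5
              ·
                rcases cl_total h hne_b_y1 x2 with H171 | H171
                ·
                  have H172 : o.cl x2 d y1 := cl_trans h H121 H171
                  exact master2 h f3 H130 f4 H171
                ·
                  rcases cl_total h hne_b_y2 x2 with H179 | H179
                  ·
                    have H180 : o.cl x2 d y2 := cl_trans h H121 H179
                    have H181 : o.cl x2 y1 y2 := cl_trans h H171 H179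
                    rcases rl_total h hne_c_x2 y2 with H184 | H184
                    ·
                      exact master1 h f2 H184 H180 f6
                    ·
                      have H185 : o.rl y2 x2 a := rl_trans h H184 H107
                      exact master2 h H1 H184 H104 H179
                  ·
                    rcases rl_total h hne_a_x2 y2 with H188 | H188
                    ·
                      have H189 : o.rl y2 c x2 := rl_trans h H107 H188
                      rcases cl_total h hne_d_y2 x2 with H190 | H190
                      ·
                        exact master1 h f2 H189 H190 f6
                      ·
                        exact master2 h H113 H188 H190 H88
                    ·
                      exact master1 h f3 H188 f7 H179

lemma core_2 (h : o.IsUSO) {a c x1 : X} {b d y1 y2 : Y}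
    (hne_a_c : a ≠ c) (hne_a_x1 : a ≠ x1) (hne_c_x1 : c ≠ x1) (hne_b_d : b ≠ d) (hne_b_y1 : b ≠ y1) (hne_b_y2 : b ≠ y2) (hne_d_y1 : d ≠ y1) (hne_d_y2 : d ≠ y2) (hne_y1_y2 : y1 ≠ y2)
    (f1 : o.rl b x1 a) (f2 : o.rl d c x1) (f3 : o.rl d a c) (f4 : o.cl a y1 b) (f5 : o.cl c d y1) (f6 : o.cl c y2 d) (f7 : o.cl a b y2) : False := by
  have H1 : o.rl d a x1 := rl_trans h f3 f2
  have H2 : o.cl a y1 y2 := cl_trans h f4 f7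
  have H3 : o.cl c y2 y1 := cl_trans h f6 f5
  rcases cl_total h hne_b_d a with H18 | H18
  ·
    have H19 : o.cl a y1 d := cl_trans h f4 H18
    rcases rl_total h hne_a_c y1 with H28 | H28
    ·
      rcases rl_total h hne_a_c y2 with H39 | H39
      ·
        rcases cl_total h hne_b_d x1 with H52 | H52
        ·
          rcases cl_total h hne_b_d c with H69 | H69
          ·
            have H70 : o.cl c b y1 := cl_trans h H69 f5
            rcases rl_total h hne_a_c b with H81 | H81
            ·
              have H82 : o.rl b x1 c := rl_trans h f1 H81
              rcases rl_total h hne_a_x1 y1 with H91 | H91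
              ·
                rcases cl_total h hne_b_y1 x1 with H98 | H98
                ·
                  exact master1 h f1 H91 H98 f4
                ·
                  have H99 : o.cl x1 y1 d := cl_trans h H98 H52
                  rcases rl_total h hne_c_x1 y1 with H108 | H108
                  ·
                    exact master2 h H82 H108 H98 H70
                  ·
                    exact master1 h f2 H108 f5 H99
              ·
                have H109 : o.rl y1 x1 c := rl_trans h H91 H28
                rcases cl_total h hne_d_y1 x1 with H116 | H116
                ·
                  have H117 : o.cl x1 b y1 := cl_trans h H52 H116
                  exact master2 h H1 H91 H19 H116
                ·
                  exact master1 h f2 H109 f5 H116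
            ·
              exact master1 h H81 H28 H70 f4
          ·
            have H118 : o.cl c y2 b := cl_trans h f6 H69
            rcases rl_total h hne_a_c b with H129 | H129
            ·
              have H130 : o.rl b x1 c := rl_trans h f1 H129
              exact master1 h H130 f2 H52 H69
            ·
              exact master2 h H129 f3 H69 H18
        ·
          exact master2 h f1 H1 H52 H18
      ·
        exact master1 h H28 H39 H2 H3
    ·
      exact master2 h f3 H28 H19 f5
  ·
    have H131 : o.cl a d y2 := cl_trans h H18 f7
    rcases rl_total h hne_a_c y2 with H140 | H140
    ·
      rcases rl_total h hne_a_c y1 with H151 | H151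
      ·
        rcases cl_total h hne_b_d x1 with H164 | H164
        ·
          exact master1 h f1 H1 H164 H18
        ·
          rcases cl_total h hne_b_d c with H181 | H181
          ·
            have H182 : o.cl c b y1 := cl_trans h H181 f5
            rcases rl_total h hne_a_c b with H193 | H193
            ·
              have H194 : o.rl b x1 c := rl_trans h f1 H193
              exact master2 h H194 f2 H164 H181
            ·
              exact master1 h H193 f3 H181 H18
          ·
            have H195 : o.cl c y2 b := cl_trans h f6 H181
            rcases rl_total h hne_a_c b with H206 | H206
            ·
              have H207 : o.rl b x1 c := rl_trans h f1 H206
              rcases rl_total h hne_a_x1 y1 with H216 | H216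
              ·
                rcases cl_total h hne_b_y1 x1 with H223 | H223
                ·
                  have H224 : o.cl x1 d y1 := cl_trans h H164 H223
                  exact master1 h f1 H216 H223 f4
                ·
                  rcases cl_total h hne_b_y2 x1 with H231 | H231
                  ·
                    have H232 : o.cl x1 d y2 := cl_trans h H164 H231
                    have H233 : o.cl x1 y1 y2 := cl_trans h H223 H231
                    rcases rl_total h hne_c_x1 y2 with H236 | H236
                    ·
                      have H237 : o.rl y2 a x1 := rl_trans h H140 H236
                      exact master1 h H207 H236 H231 H195
                    ·
                      exact master2 h f2 H236 f6 H232
                  ·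
                    rcases rl_total h hne_a_x1 y2 with H240 | H240
                    ·
                      exact master2 h f1 H240 H231 f7
                    ·
                      have H241 : o.rl y2 x1 c := rl_trans h H240 H140
                      rcases cl_total h hne_d_y2 x1 with H242 | H242
                      ·
                        exact master2 h f2 H241 f6 H242
                      ·
                        exact master1 h H1 H240 H131 H242
              ·
                have H243 : o.rl y1 x1 c := rl_trans h H216 H151
                rcases cl_total h hne_d_y1 x1 with H250 | H250
                ·
                  rcases cl_total h hne_d_y1 a with H257 | H257
                  ·
                    rcases cl_total h hne_d_y2 x1 with H264 | H264
                    ·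
                      rcases rl_total h hne_c_x1 y2 with H267 | H267
                      ·
                        have H268 : o.rl y2 a x1 := rl_trans h H140 H267
                        rcases cl_total h hne_b_y2 x1 with H269 | H269
                        ·
                          exact master1 h H207 H267 H269 H195
                        ·
                          exact master2 h f1 H268 H269 f7
                      ·
                        exact master2 h f2 H267 f6 H264
                    ·
                      have H270 : o.cl x1 y2 b := cl_trans h H264 H164
                      have H271 : o.cl x1 y2 y1 := cl_trans h H264 H250
                      rcases rl_total h hne_a_x1 y2 with H274 | H274
                      ·
                        exact master2 h f1 H274 H270 f7
                      ·
                        have H275 : o.rl y2 x1 c := rl_trans h H274 H140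
                        exact master1 h H1 H274 H131 H264
                  ·
                    exact master2 h H1 H216 H257 H250
                ·
                  have H276 : o.cl x1 y1 b := cl_trans h H250 H164
                  exact master1 h f2 H243 f5 H250
            ·
              exact master2 h H206 H140 H195 f7
      ·
        exact master2 h H151 H140 H3 H2
    ·
      exact master1 h f3 H140 H131 f6

lemma core_3 (h : o.IsUSO) {a c x1 x2 : X} {b d y2 : Y}
    (hne_a_c : a ≠ c) (hne_a_x1 : a ≠ x1) (hne_a_x2 : a ≠ x2) (hne_c_x1 : c ≠ x1) (hne_c_x2 : c ≠ x2) (hne_x1_x2 : x1 ≠ x2) (hne_b_d : b ≠ d) (hne_b_y2 : b ≠ y2) (hne_d_y2 : d ≠ y2)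
    (f1 : o.rl b x1 a) (f2 : o.rl d c x1) (f3 : o.rl d x2 c) (f4 : o.rl b a x2) (f5 : o.cl a d b) (f6 : o.cl c y2 d) (f7 : o.cl a b y2) : False := by
  have H1 : o.rl b x1 x2 := rl_trans h f1 f4
  have H2 : o.rl d x2 x1 := rl_trans h f3 f2
  have H3 : o.cl a d y2 := cl_trans h f5 f7
  rcases rl_total h hne_a_c b with H18 | H18
  ·
    have H19 : o.rl b x1 c := rl_trans h f1 H18
    rcases rl_total h hne_a_c d with H28 | H28
    ·
      have H29 : o.rl d a x1 := rl_trans h H28 f2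
      rcases rl_total h hne_a_c y2 with H32 | H32
      ·
        rcases cl_total h hne_b_d x1 with H39 | H39
        ·
          exact master1 h f1 H29 H39 f5
        ·
          rcases cl_total h hne_b_d c with H48 | H48
          ·
            exact master2 h H19 f2 H39 H48
          ·
            have H49 : o.cl c y2 b := cl_trans h f6 H48
            rcases cl_total h hne_b_d x2 with H56 | H56
            ·
              exact master2 h H1 H2 H39 H56
            ·
              rcases rl_total h hne_a_x1 y2 with H65 | H65
              ·
                rcases cl_total h hne_b_y2 x1 with H74 | H74
                ·
                  have H75 : o.cl x1 d y2 := cl_trans h H39 H74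
                  rcases rl_total h hne_c_x1 y2 with H82 | H82
                  ·
                    exact master1 h H19 H82 H74 H49
                  ·
                    exact master2 h f2 H82 f6 H75
                ·
                  exact master2 h f1 H65 H74 f7
              ·
                have H83 : o.rl y2 x1 c := rl_trans h H65 H32
                rcases cl_total h hne_d_y2 x1 with H94 | H94
                ·
                  exact master2 h f2 H83 f6 H94
                ·
                  have H95 : o.cl x1 y2 b := cl_trans h H94 H39
                  exact master1 h H29 H65 H3 H94
      ·
        exact master1 h H28 H32 H3 f6
    ·
      have H96 : o.rl d x2 a := rl_trans h f3 H28
      rcases cl_total h hne_b_d c with H99 | H99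
      ·
        exact master2 h H18 H28 f5 H99
      ·
        have H100 : o.cl c y2 b := cl_trans h f6 H99
        rcases rl_total h hne_a_c y2 with H101 | H101
        ·
          exact master2 h H28 H101 f6 H3
        ·
          exact master1 h H18 H101 f7 H100
  ·
    have H102 : o.rl b c x2 := rl_trans h H18 f4
    rcases rl_total h hne_a_c d with H111 | H111
    ·
      have H112 : o.rl d a x1 := rl_trans h H111 f2
      rcases cl_total h hne_b_d c with H115 | H115
      ·
        exact master1 h H18 H111 H115 f5
      ·
        have H116 : o.cl c y2 b := cl_trans h f6 H115
        rcases rl_total h hne_a_c y2 with H117 | H117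
        ·
          exact master2 h H18 H117 H116 f7
        ·
          exact master1 h H111 H117 H3 f6
    ·
      have H118 : o.rl d x2 a := rl_trans h f3 H111
      rcases rl_total h hne_a_c y2 with H121 | H121
      ·
        exact master2 h H111 H121 f6 H3
      ·
        rcases cl_total h hne_b_d x2 with H128 | H128
        ·
          exact master2 h f4 H118 f5 H128
        ·
          rcases cl_total h hne_b_d c with H137 | H137
          ·
            exact master1 h H102 f3 H137 H128
          ·
            have H138 : o.cl c y2 b := cl_trans h f6 H137
            rcases cl_total h hne_b_d x1 with H145 | H145
            ·
              exact master1 h H1 H2 H145 H128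
            ·
              rcases rl_total h hne_a_x1 y2 with H154 | H154
              ·
                have H155 : o.rl y2 c x1 := rl_trans h H121 H154
                rcases cl_total h hne_b_y2 x1 with H166 | H166
                ·
                  have H167 : o.cl x1 d y2 := cl_trans h H145 H166
                  rcases rl_total h hne_c_x1 b with H176 | H176
                  ·
                    rcases rl_total h hne_a_x2 y2 with H185 | H185
                    ·
                      have H186 : o.rl y2 c x2 := rl_trans h H121 H185
                      rcases cl_total h hne_d_y2 x2 with H189 | H189
                      ·
                        exact master1 h f3 H186 H189 f6
                      ·
                        have H190 : o.cl x2 y2 b := cl_trans h H189 H128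
                        exact master2 h H118 H185 H189 H3
                    ·
                      have H191 : o.rl y2 x2 x1 := rl_trans h H185 H154
                      rcases cl_total h hne_b_y2 x2 with H194 | H194
                      ·
                        have H195 : o.cl x2 d y2 := cl_trans h H128 H194
                        rcases rl_total h hne_c_x2 y2 with H196 | H196
                        ·
                          exact master1 h f3 H196 H195 f6
                        ·
                          exact master2 h H102 H196 H138 H194
                      ·
                        exact master1 h f4 H185 f7 H194
                  ·
                    exact master1 h H176 H155 H166 H138
                ·
                  exact master2 h f1 H154 H166 f7
              ·
                rcases rl_total h hne_a_x2 y2 with H205 | H205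
                ·
                  have H206 : o.rl y2 c x2 := rl_trans h H121 H205
                  have H207 : o.rl y2 x1 x2 := rl_trans h H154 H205
                  rcases cl_total h hne_d_y2 x2 with H212 | H212
                  ·
                    exact master1 h f3 H206 H212 f6
                  ·
                    have H213 : o.cl x2 y2 b := cl_trans h H212 H128
                    exact master2 h H118 H205 H212 H3
                ·
                  rcases cl_total h hne_b_y2 x2 with H218 | H218
                  ·
                    have H219 : o.cl x2 d y2 := cl_trans h H128 H218
                    rcases rl_total h hne_c_x2 y2 with H222 | H222
                    ·
                      exact master1 h f3 H222 H219 f6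
                    ·
                      exact master2 h H102 H222 H138 H218
                  ·
                    exact master1 h f4 H205 f7 H218

lemma core_4 (h : o.IsUSO) {a c x1 x2 : X} {b d y1 : Y}
    (hne_a_c : a ≠ c) (hne_a_x1 : a ≠ x1) (hne_a_x2 : a ≠ x2) (hne_c_x1 : c ≠ x1) (hne_c_x2 : c ≠ x2) (hne_x1_x2 : x1 ≠ x2) (hne_b_d : b ≠ d) (hne_b_y1 : b ≠ y1) (hne_d_y1 : d ≠ y1)
    (f1 : o.rl b x1 a) (f2 : o.rl d c x1) (f3 : o.rl d x2 c) (f4 : o.rl b a x2) (f5 : o.cl a y1 b) (f6 : o.cl c d y1) (f7 : o.cl c b d) : False := by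
  have H1 : o.rl b x1 x2 := rl_trans h f1 f4
  have H2 : o.rl d x2 x1 := rl_trans h f3 f2
  have H3 : o.cl c b y1 := cl_trans h f7 f6
  rcases rl_total h hne_a_c b with H18 | H18
  ·
    have H19 : o.rl b x1 c := rl_trans h f1 H18
    rcases rl_total h hne_a_c y1 with H28 | H28
    ·
      rcases cl_total h hne_b_d x1 with H41 | H41
      ·
        rcases cl_total h hne_b_d x2 with H56 | H56
        ·
          rcases rl_total h hne_a_c d with H73 | H73
          ·
            have H74 : o.rl d a x1 := rl_trans h H73 f2
            rcases cl_total h hne_b_d a with H85 | H85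
            ·
              have H86 : o.cl a y1 d := cl_trans h f5 H85
              rcases rl_total h hne_a_x1 y1 with H95 | H95
              ·
                rcases cl_total h hne_b_y1 x1 with H104 | H104
                ·
                  exact master1 h f1 H95 H104 f5
                ·
                  have H105 : o.cl x1 y1 d := cl_trans h H104 H41
                  rcases rl_total h hne_c_x1 y1 with H112 | H112
                  ·
                    exact master2 h H19 H112 H104 H3
                  ·
                    exact master1 h f2 H112 f6 H105
              ·
                have H113 : o.rl y1 x1 c := rl_trans h H95 H28
                rcases cl_total h hne_d_y1 x1 with H124 | H124
                ·
                  have H125 : o.cl x1 b y1 := cl_trans h H41 H124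
                  exact master2 h H74 H95 H86 H124
                ·
                  exact master1 h f2 H113 f6 H124
            ·
              exact master1 h f1 H74 H41 H85
          ·
            have H126 : o.rl d x2 a := rl_trans h f3 H73
            rcases cl_total h hne_b_d a with H137 | H137
            ·
              have H138 : o.cl a y1 d := cl_trans h f5 H137
              exact master1 h H73 H28 f6 H138
            ·
              exact master2 h H18 H73 H137 f7
        ·
          exact master1 h H1 H2 H41 H56
      ·
        exact master2 h H19 f2 H41 f7
    ·
      exact master2 h H18 H28 f5 H3
  ·
    have H139 : o.rl b c x2 := rl_trans h H18 f4
    rcases rl_total h hne_a_c y1 with H148 | H148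
    ·
      exact master1 h H18 H148 H3 f5
    ·
      rcases cl_total h hne_b_d x2 with H161 | H161
      ·
        rcases cl_total h hne_b_d x1 with H176 | H176
        ·
          rcases rl_total h hne_a_c d with H193 | H193
          ·
            have H194 : o.rl d a x1 := rl_trans h H193 f2
            rcases cl_total h hne_b_d a with H205 | H205
            ·
              have H206 : o.cl a y1 d := cl_trans h f5 H205
              exact master2 h H193 H148 H206 f6
            ·
              exact master1 h H18 H193 f7 H205
          ·
            have H207 : o.rl d x2 a := rl_trans h f3 H193
            rcases cl_total h hne_b_d a with H218 | H218
            ·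
              have H219 : o.cl a y1 d := cl_trans h f5 H218
              rcases rl_total h hne_a_x1 y1 with H228 | H228
              ·
                have H229 : o.rl y1 c x1 := rl_trans h H148 H228
                rcases cl_total h hne_b_y1 x1 with H240 | H240
                ·
                  exact master1 h f1 H228 H240 f5
                ·
                  have H241 : o.cl x1 y1 d := cl_trans h H240 H176
                  rcases rl_total h hne_c_x1 b with H250 | H250
                  ·
                    rcases rl_total h hne_a_x2 y1 with H259 | H259
                    ·
                      have H260 : o.rl y1 c x2 := rl_trans h H148 H259
                      rcases cl_total h hne_d_y1 x2 with H263 | H263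
                      ·
                        have H264 : o.cl x2 b y1 := cl_trans h H161 H263
                        exact master1 h H207 H259 H263 H219
                      ·
                        exact master2 h f3 H260 H263 f6
                    ·
                      have H265 : o.rl y1 x2 x1 := rl_trans h H259 H228
                      rcases cl_total h hne_b_y1 x2 with H268 | H268
                      ·
                        exact master2 h f4 H259 f5 H268
                      ·
                        have H269 : o.cl x2 y1 d := cl_trans h H268 H161
                        rcases rl_total h hne_c_x2 y1 with H270 | H270
                        ·
                          exact master2 h f3 H270 H269 f6
                        ·
                          exact master1 h H139 H270 H3 H268
                  ·
                    exact master2 h H250 H229 H240 H3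
              ·
                rcases rl_total h hne_a_x2 y1 with H279 | H279
                ·
                  have H280 : o.rl y1 c x2 := rl_trans h H148 H279
                  have H281 : o.rl y1 x1 x2 := rl_trans h H228 H279
                  rcases cl_total h hne_d_y1 x2 with H286 | H286
                  ·
                    have H287 : o.cl x2 b y1 := cl_trans h H161 H286
                    exact master1 h H207 H279 H286 H219
                  ·
                    exact master2 h f3 H280 H286 f6
                ·
                  rcases cl_total h hne_b_y1 x2 with H292 | H292
                  ·
                    exact master2 h f4 H279 f5 H292
                  ·
                    have H293 : o.cl x2 y1 d := cl_trans h H292 H161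
                    rcases rl_total h hne_c_x2 y1 with H296 | H296
                    ·
                      exact master2 h f3 H296 H293 f6
                    ·
                      exact master1 h H139 H296 H3 H292
            ·
              exact master2 h f4 H207 H218 H161
        ·
          exact master2 h H1 H2 H176 H161
      ·
        exact master1 h H139 f3 f7 H161

lemma core_5 (h : o.IsUSO) {a c : X} {b d y1 y2 : Y}
    (hne_a_c : a ≠ c) (hne_b_d : b ≠ d) (hne_b_y1 : b ≠ y1) (hne_b_y2 : b ≠ y2) (hne_d_y1 : d ≠ y1) (hne_d_y2 : d ≠ y2) (hne_y1_y2 : y1 ≠ y2)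
    (f1 : o.rl b c a) (f2 : o.rl d a c) (f3 : o.cl a y1 b) (f4 : o.cl c d y1) (f5 : o.cl c y2 d) (f6 : o.cl a b y2) : False := by
  have H1 : o.cl a y1 y2 := cl_trans h f3 f6
  have H2 : o.cl c y2 y1 := cl_trans h f5 f4
  rcases cl_total h hne_b_d a with H15 | H15
  ·
    have H16 : o.cl a y1 d := cl_trans h f3 H15
    rcases cl_total h hne_b_d c with H23 | H23
    ·
      have H24 : o.cl c b y1 := cl_trans h H23 f4
      rcases rl_total h hne_a_c y1 with H25 | H25
      ·
        exact master1 h f1 H25 H24 f3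
      ·
        exact master2 h f2 H25 H16 f4
    ·
      have H26 : o.cl c y2 b := cl_trans h f5 H23
      exact master2 h f1 f2 H23 H15
  ·
    have H27 : o.cl a d y2 := cl_trans h H15 f6
    rcases cl_total h hne_b_d c with H34 | H34
    ·
      have H35 : o.cl c b y1 := cl_trans h H34 f4
      exact master1 h f1 f2 H34 H15
    ·
      have H36 : o.cl c y2 b := cl_trans h f5 H34
      rcases rl_total h hne_a_c y2 with H37 | H37
      ·
        exact master2 h f1 H37 H36 f6
      ·
        exact master1 h f2 H37 H27 f5

lemma core_6 (h : o.IsUSO) {a c x2 : X} {b d y2 : Y}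
    (hne_a_c : a ≠ c) (hne_a_x2 : a ≠ x2) (hne_c_x2 : c ≠ x2) (hne_b_d : b ≠ d) (hne_b_y2 : b ≠ y2) (hne_d_y2 : d ≠ y2)
    (f1 : o.rl b c a) (f2 : o.rl d x2 c) (f3 : o.rl b a x2) (f4 : o.cl a d b) (f5 : o.cl c y2 d) (f6 : o.cl a b y2) : False := by
  have H1 : o.rl b c x2 := rl_trans h f1 f3
  have H2 : o.cl a d y2 := cl_trans h f4 f6
  rcases rl_total h hne_a_c d with H7 | H7
  ·
    rcases cl_total h hne_b_d c with H10 | H10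
    ·
      exact master1 h f1 H7 H10 f4
    ·
      have H11 : o.cl c y2 b := cl_trans h f5 H10
      rcases rl_total h hne_a_c y2 with H12 | H12
      ·
        exact master2 h f1 H12 H11 f6
      ·
        exact master1 h H7 H12 H2 f5
  ·
    have H13 : o.rl d x2 a := rl_trans h f2 H7
    rcases rl_total h hne_a_c y2 with H16 | H16
    ·
      exact master2 h H7 H16 f5 H2
    ·
      rcases cl_total h hne_b_d x2 with H21 | H21
      ·
        exact master2 h f3 H13 f4 H21
      ·
        rcases cl_total h hne_b_d c with H28 | H28
        ·
          exact master1 h H1 f2 H28 H21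
        ·
          have H29 : o.cl c y2 b := cl_trans h f5 H28
          rcases rl_total h hne_a_x2 y2 with H34 | H34
          ·
            have H35 : o.rl y2 c x2 := rl_trans h H16 H34
            rcases cl_total h hne_d_y2 x2 with H38 | H38
            ·
              exact master1 h f2 H35 H38 f5
            ·
              have H39 : o.cl x2 y2 b := cl_trans h H38 H21
              exact master2 h H13 H34 H38 H2
          ·
            rcases cl_total h hne_b_y2 x2 with H42 | H42
            ·
              have H43 : o.cl x2 d y2 := cl_trans h H21 H42
              rcases rl_total h hne_c_x2 y2 with H44 | H44
              ·
                exact master1 h f2 H44 H43 f5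
              ·
                exact master2 h H1 H44 H29 H42
            ·
              exact master1 h f3 H34 f6 H42

lemma core_7 (h : o.IsUSO) {a c x2 : X} {b d y1 : Y}
    (hne_a_c : a ≠ c) (hne_a_x2 : a ≠ x2) (hne_c_x2 : c ≠ x2) (hne_b_d : b ≠ d) (hne_b_y1 : b ≠ y1) (hne_d_y1 : d ≠ y1)
    (f1 : o.rl b c a) (f2 : o.rl d x2 c) (f3 : o.rl b a x2) (f4 : o.cl a y1 b) (f5 : o.cl c d y1) (f6 : o.cl c b d) : False := by
  have H1 : o.rl b c x2 := rl_trans h f1 f3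
  have H2 : o.cl c b y1 := cl_trans h f6 f5
  rcases rl_total h hne_a_c y1 with H7 | H7
  ·
    exact master1 h f1 H7 H2 f4
  ·
    rcases cl_total h hne_b_d x2 with H14 | H14
    ·
      rcases rl_total h hne_a_c d with H23 | H23
      ·
        rcases cl_total h hne_b_d a with H30 | H30
        ·
          have H31 : o.cl a y1 d := cl_trans h f4 H30
          exact master2 h H23 H7 H31 f5
        ·
          exact master1 h f1 H23 f6 H30
      ·
        have H32 : o.rl d x2 a := rl_trans h f2 H23
        rcases cl_total h hne_b_d a with H39 | H39
        ·
          have H40 : o.cl a y1 d := cl_trans h f4 H39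
          rcases rl_total h hne_a_x2 y1 with H45 | H45
          ·
            have H46 : o.rl y1 c x2 := rl_trans h H7 H45
            rcases cl_total h hne_d_y1 x2 with H49 | H49
            ·
              have H50 : o.cl x2 b y1 := cl_trans h H14 H49
              exact master1 h H32 H45 H49 H40
            ·
              exact master2 h f2 H46 H49 f5
          ·
            rcases cl_total h hne_b_y1 x2 with H53 | H53
            ·
              exact master2 h f3 H45 f4 H53
            ·
              have H54 : o.cl x2 y1 d := cl_trans h H53 H14
              rcases rl_total h hne_c_x2 y1 with H55 | H55
              ·
                exact master2 h f2 H55 H54 f5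
              ·
                exact master1 h H1 H55 H2 H53
        ·
          exact master2 h f3 H32 H39 H14
    ·
      exact master1 h H1 f2 f6 H14

lemma core_8 (h : o.IsUSO) {a c x1 : X} {b d y2 : Y}
    (hne_a_c : a ≠ c) (hne_a_x1 : a ≠ x1) (hne_c_x1 : c ≠ x1) (hne_b_d : b ≠ d) (hne_b_y2 : b ≠ y2) (hne_d_y2 : d ≠ y2)
    (f1 : o.rl b x1 a) (f2 : o.rl d c x1) (f3 : o.rl d a c) (f4 : o.cl a d b) (f5 : o.cl c y2 d) (f6 : o.cl a b y2) : False := by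
  have H1 : o.rl d a x1 := rl_trans h f3 f2
  have H2 : o.cl a d y2 := cl_trans h f4 f6
  rcases rl_total h hne_a_c y2 with H7 | H7
  ·
    rcases cl_total h hne_b_d x1 with H14 | H14
    ·
      exact master1 h f1 H1 H14 f4
    ·
      rcases rl_total h hne_a_c b with H23 | H23
      ·
        have H24 : o.rl b x1 c := rl_trans h f1 H23
        rcases cl_total h hne_b_d c with H31 | H31
        ·
          exact master2 h H24 f2 H14 H31
        ·
          have H32 : o.cl c y2 b := cl_trans h f5 H31
          rcases rl_total h hne_a_x1 y2 with H37 | H37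
          ·
            rcases cl_total h hne_b_y2 x1 with H40 | H40
            ·
              have H41 : o.cl x1 d y2 := cl_trans h H14 H40
              rcases rl_total h hne_c_x1 y2 with H42 | H42
              ·
                exact master1 h H24 H42 H40 H32
              ·
                exact master2 h f2 H42 f5 H41
            ·
              exact master2 h f1 H37 H40 f6
          ·
            have H43 : o.rl y2 x1 c := rl_trans h H37 H7
            rcases cl_total h hne_d_y2 x1 with H46 | H46
            ·
              exact master2 h f2 H43 f5 H46
            ·
              have H47 : o.cl x1 y2 b := cl_trans h H46 H14
              exact master1 h H1 H37 H2 H46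
      ·
        rcases cl_total h hne_b_d c with H54 | H54
        ·
          exact master1 h H23 f3 H54 f4
        ·
          have H55 : o.cl c y2 b := cl_trans h f5 H54
          exact master2 h H23 H7 H55 f6
  ·
    exact master1 h f3 H7 H2 f5

lemma core_9 (h : o.IsUSO) {a c x1 : X} {b d y1 : Y}
    (hne_a_c : a ≠ c) (hne_a_x1 : a ≠ x1) (hne_c_x1 : c ≠ x1) (hne_b_d : b ≠ d) (hne_b_y1 : b ≠ y1) (hne_d_y1 : d ≠ y1)
    (f1 : o.rl b x1 a) (f2 : o.rl d c x1) (f3 : o.rl d a c) (f4 : o.cl a y1 b) (f5 : o.cl c d y1) (f6 : o.cl c b d) : False := by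
  have H1 : o.rl d a x1 := rl_trans h f3 f2
  have H2 : o.cl c b y1 := cl_trans h f6 f5
  rcases rl_total h hne_a_c b with H7 | H7
  ·
    have H8 : o.rl b x1 c := rl_trans h f1 H7
    rcases rl_total h hne_a_c y1 with H11 | H11
    ·
      rcases cl_total h hne_b_d x1 with H16 | H16
      ·
        rcases cl_total h hne_b_d a with H23 | H23
        ·
          have H24 : o.cl a y1 d := cl_trans h f4 H23
          rcases rl_total h hne_a_x1 y1 with H29 | H29
          ·
            rcases cl_total h hne_b_y1 x1 with H32 | H32
            ·
              exact master1 h f1 H29 H32 f4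
            ·
              have H33 : o.cl x1 y1 d := cl_trans h H32 H16
              rcases rl_total h hne_c_x1 y1 with H34 | H34
              ·
                exact master2 h H8 H34 H32 H2
              ·
                exact master1 h f2 H34 f5 H33
          ·
            have H35 : o.rl y1 x1 c := rl_trans h H29 H11
            rcases cl_total h hne_d_y1 x1 with H38 | H38
            ·
              have H39 : o.cl x1 b y1 := cl_trans h H16 H38
              exact master2 h H1 H29 H24 H38
            ·
              exact master1 h f2 H35 f5 H38
        ·
          exact master1 h f1 H1 H16 H23
      ·
        exact master2 h H8 f2 H16 f6
    ·
      exact master2 h H7 H11 f4 H2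
  ·
    rcases cl_total h hne_b_d a with H42 | H42
    ·
      have H43 : o.cl a y1 d := cl_trans h f4 H42
      rcases rl_total h hne_a_c y1 with H44 | H44
      ·
        exact master1 h H7 H44 H2 f4
      ·
        exact master2 h f3 H44 H43 f5
    ·
      exact master1 h H7 f3 f6 H42

lemma core_10 (h : o.IsUSO) {a c x1 x2 : X} {b d : Y}
    (hne_a_c : a ≠ c) (hne_a_x1 : a ≠ x1) (hne_a_x2 : a ≠ x2) (hne_c_x1 : c ≠ x1) (hne_c_x2 : c ≠ x2) (hne_x1_x2 : x1 ≠ x2) (hne_b_d : b ≠ d)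
    (f1 : o.rl b x1 a) (f2 : o.rl d c x1) (f3 : o.rl d x2 c) (f4 : o.rl b a x2) (f5 : o.cl a d b) (f6 : o.cl c b d) : False := by
  have H1 : o.rl b x1 x2 := rl_trans h f1 f4
  have H2 : o.rl d x2 x1 := rl_trans h f3 f2
  rcases rl_total h hne_a_c b with H15 | H15
  ·
    have H16 : o.rl b x1 c := rl_trans h f1 H15
    rcases rl_total h hne_a_c d with H23 | H23
    ·
      have H24 : o.rl d a x1 := rl_trans h H23 f2
      rcases cl_total h hne_b_d x1 with H25 | H25
      ·
        exact master1 h f1 H24 H25 f5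
      ·
        exact master2 h H16 f2 H25 f6
    ·
      have H26 : o.rl d x2 a := rl_trans h f3 H23
      exact master2 h H15 H23 f5 f6
  ·
    have H27 : o.rl b c x2 := rl_trans h H15 f4
    rcases rl_total h hne_a_c d with H34 | H34
    ·
      have H35 : o.rl d a x1 := rl_trans h H34 f2
      exact master1 h H15 H34 f6 f5
    ·
      have H36 : o.rl d x2 a := rl_trans h f3 H34
      rcases cl_total h hne_b_d x2 with H37 | H37
      ·
        exact master2 h f4 H36 f5 H37
      ·
        exact master1 h H27 f3 f6 H37

lemma core_11 (h : o.IsUSO) {a c : X} {b d y2 : Y}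
    (hne_a_c : a ≠ c) (hne_b_d : b ≠ d) (hne_b_y2 : b ≠ y2) (hne_d_y2 : d ≠ y2)
    (f1 : o.rl b c a) (f2 : o.rl d a c) (f3 : o.cl a d b) (f4 : o.cl c y2 d) (f5 : o.cl a b y2) : False := by
  have H1 : o.cl a d y2 := cl_trans h f3 f5
  rcases cl_total h hne_b_d c with H4 | H4
  ·
    exact master1 h f1 f2 H4 f3
  ·
    have H5 : o.cl c y2 b := cl_trans h f4 H4
    rcases rl_total h hne_a_c y2 with H6 | H6
    ·
      exact master2 h f1 H6 H5 f5
    ·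
      exact master1 h f2 H6 H1 f4

lemma core_12 (h : o.IsUSO) {a c : X} {b d y1 : Y}
    (hne_a_c : a ≠ c) (hne_b_d : b ≠ d) (hne_b_y1 : b ≠ y1) (hne_d_y1 : d ≠ y1)
    (f1 : o.rl b c a) (f2 : o.rl d a c) (f3 : o.cl a y1 b) (f4 : o.cl c d y1) (f5 : o.cl c b d) : False := by
  have H1 : o.cl c b y1 := cl_trans h f5 f4
  rcases cl_total h hne_b_d a with H4 | H4
  ·
    have H5 : o.cl a y1 d := cl_trans h f3 H4
    rcases rl_total h hne_a_c y1 with H6 | H6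
    ·
      exact master1 h f1 H6 H1 f3
    ·
      exact master2 h f2 H6 H5 f4
  ·
    exact master1 h f1 f2 f5 H4

lemma core_13 (h : o.IsUSO) {a c x2 : X} {b d : Y}
    (hne_a_c : a ≠ c) (hne_a_x2 : a ≠ x2) (hne_c_x2 : c ≠ x2) (hne_b_d : b ≠ d)
    (f1 : o.rl b c a) (f2 : o.rl d x2 c) (f3 : o.rl b a x2) (f4 : o.cl a d b) (f5 : o.cl c b d) : False := by
  have H1 : o.rl b c x2 := rl_trans h f1 f3
  rcases rl_total h hne_a_c d with H4 | H4
  ·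
    exact master1 h f1 H4 f5 f4
  ·
    have H5 : o.rl d x2 a := rl_trans h f2 H4
    rcases cl_total h hne_b_d x2 with H6 | H6
    ·
      exact master2 h f3 H5 f4 H6
    ·
      exact master1 h H1 f2 f5 H6

lemma core_14 (h : o.IsUSO) {a c x1 : X} {b d : Y}
    (hne_a_c : a ≠ c) (hne_a_x1 : a ≠ x1) (hne_c_x1 : c ≠ x1) (hne_b_d : b ≠ d)
    (f1 : o.rl b x1 a) (f2 : o.rl d c x1) (f3 : o.rl d a c) (f4 : o.cl a d b) (f5 : o.cl c b d) : False := by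
  have H1 : o.rl d a x1 := rl_trans h f3 f2
  rcases rl_total h hne_a_c b with H4 | H4
  ·
    have H5 : o.rl b x1 c := rl_trans h f1 H4
    rcases cl_total h hne_b_d x1 with H6 | H6
    ·
      exact master1 h f1 H1 H6 f4
    ·
      exact master2 h H5 f2 H6 f5
  ·
    exact master1 h H4 f3 f5 f4

lemma core_15 (h : o.IsUSO) {a c : X} {b d : Y}
    (hne_a_c : a ≠ c) (hne_b_d : b ≠ d)
    (f1 : o.rl b c a) (f2 : o.rl d a c) (f3 : o.cl a d b) (f4 : o.cl c b d) : False := by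
  exact master1 h f1 f2 f4 f3

lemma lineC (h : o.IsUSO) {a : X} {b d y1 y2 : Y} (f5 : o.cl a y1 b) (f6 : ¬ o.cl a y1 d)
    (f7 : o.cl a y2 d) (f8 : ¬ o.cl a y2 b) : False := by
  by_cases hbd : b = d
  · subst hbd; exact f6 f5
  · rcases cl_total h hbd a with hh | hh
    · exact f6 (cl_trans h f5 hh)
    · exact f8 (cl_trans h f7 hh)

lemma rowC (h : o.IsUSO) {b : Y} {a c x1 x2 : X} (f1 : o.rl b x1 a) (f2 : ¬ o.rl b x1 c)
    (f3 : o.rl b x2 c) (f4 : ¬ o.rl b x2 a) : False := by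
  by_cases hac : a = c
  · subst hac; exact f2 f1
  · rcases rl_total h hac b with hh | hh
    · exact f2 (rl_trans h f1 hh)
    · exact f4 (rl_trans h f3 hh)

lemma phi_subset_or (h : o.IsUSO) (u w : X × Y) :
    o.phiX u ⊆ o.phiX w ∨ o.phiY u ⊆ o.phiY w ∨ o.phiX w ⊆ o.phiX u ∨ o.phiY w ⊆ o.phiY u := by
  by_contra hcon
  push_neg at hcon
  obtain ⟨hs1, hs2, hs3, hs4⟩ := hcon
  obtain ⟨a, b⟩ := u
  obtain ⟨c, d⟩ := w
  obtain ⟨x1, hx1u, hx1w⟩ := Finset.not_subset.mp hs1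
  obtain ⟨x2, hx2w, hx2u⟩ := Finset.not_subset.mp hs3
  obtain ⟨y1, hy1u, hy1w⟩ := Finset.not_subset.mp hs2
  obtain ⟨y2, hy2w, hy2u⟩ := Finset.not_subset.mp hs4
  have F1 : o.rl b x1 a := (Finset.mem_filter.mp hx1u).2
  have F2n : ¬ o.rl d x1 c := fun hc => hx1w (Finset.mem_filter.mpr ⟨Finset.mem_univ _, hc⟩)
  have F3 : o.rl d x2 c := (Finset.mem_filter.mp hx2w).2
  have F4n : ¬ o.rl b x2 a := fun hc => hx2u (Finset.mem_filter.mpr ⟨Finset.mem_univ _, hc⟩)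
  have F5 : o.cl a y1 b := (Finset.mem_filter.mp hy1u).2
  have F6n : ¬ o.cl c y1 d := fun hc => hy1w (Finset.mem_filter.mpr ⟨Finset.mem_univ _, hc⟩)
  have F7 : o.cl c y2 d := (Finset.mem_filter.mp hy2w).2
  have F8n : ¬ o.cl a y2 b := fun hc => hy2u (Finset.mem_filter.mpr ⟨Finset.mem_univ _, hc⟩)
  by_cases hac : a = c
  · subst hac; exact lineC h F5 F6n F7 F8n
  by_cases hbd : b = d
  · subst hbd; exact rowC h F1 F2n F3 F4n

  by_cases hx1 : c = x1
  ·
    by_cases hx2 : a = x2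
    ·
      by_cases hy1 : d = y1
      ·
        by_cases hy2 : b = y2
        ·
          subst hx1
          subst hx2
          subst hy1
          subst hy2
          exact core_15 h hac hbd F1 F3 F5 F7
        ·
          subst hx1
          subst hx2
          subst hy1
          exact core_11 h hac hbd hy2 (cl_ne h F7).symm F1 F3 F5 F7 ((cl_total h (Ne.symm hy2) a).resolve_left F8n)
      ·
        by_cases hy2 : b = y2
        ·
          subst hx1
          subst hx2
          subst hy2
          exact core_12 h hac hbd (cl_ne h F5).symm hy1 F1 F3 F5 ((cl_total h (Ne.symm hy1) c).resolve_left F6n) F7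
        ·
          subst hx1
          subst hx2
          exact core_5 h hac hbd (cl_ne h F5).symm hy2 hy1 (cl_ne h F7).symm (fun e => F8n (e ▸ F5)) F1 F3 F5 ((cl_total h (Ne.symm hy1) c).resolve_left F6n) F7 ((cl_total h (Ne.symm hy2) a).resolve_left F8n)
    ·
      by_cases hy1 : d = y1
      ·
        by_cases hy2 : b = y2
        ·
          subst hx1
          subst hy1
          subst hy2
          exact core_13 h hac hx2 (rl_ne h F3).symm hbd F1 F3 ((rl_total h (Ne.symm hx2) b).resolve_left F4n) F5 F7
        ·
          subst hx1
          subst hy1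
          exact core_6 h hac hx2 (rl_ne h F3).symm hbd hy2 (cl_ne h F7).symm F1 F3 ((rl_total h (Ne.symm hx2) b).resolve_left F4n) F5 F7 ((cl_total h (Ne.symm hy2) a).resolve_left F8n)
      ·
        by_cases hy2 : b = y2
        ·
          subst hx1
          subst hy2
          exact core_7 h hac hx2 (rl_ne h F3).symm hbd (cl_ne h F5).symm hy1 F1 F3 ((rl_total h (Ne.symm hx2) b).resolve_left F4n) F5 ((cl_total h (Ne.symm hy1) c).resolve_left F6n) F7
        ·
          subst hx1
          exact core_1 h hac hx2 (rl_ne h F3).symm hbd (cl_ne h F5).symm hy2 hy1 (cl_ne h F7).symm (fun e => F8n (e ▸ F5)) F1 F3 ((rl_total h (Ne.symm hx2) b).resolve_left F4n) F5 ((cl_total h (Ne.symm hy1) c).resolve_left F6n) F7 ((cl_total h (Ne.symm hy2) a).resolve_left F8n)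
  ·
    by_cases hx2 : a = x2
    ·
      by_cases hy1 : d = y1
      ·
        by_cases hy2 : b = y2
        ·
          subst hx2
          subst hy1
          subst hy2
          exact core_14 h hac (rl_ne h F1).symm hx1 hbd F1 ((rl_total h (Ne.symm hx1) d).resolve_left F2n) F3 F5 F7
        ·
          subst hx2
          subst hy1
          exact core_8 h hac (rl_ne h F1).symm hx1 hbd hy2 (cl_ne h F7).symm F1 ((rl_total h (Ne.symm hx1) d).resolve_left F2n) F3 F5 F7 ((cl_total h (Ne.symm hy2) a).resolve_left F8n)
      ·
        by_cases hy2 : b = y2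
        ·
          subst hx2
          subst hy2
          exact core_9 h hac (rl_ne h F1).symm hx1 hbd (cl_ne h F5).symm hy1 F1 ((rl_total h (Ne.symm hx1) d).resolve_left F2n) F3 F5 ((cl_total h (Ne.symm hy1) c).resolve_left F6n) F7
        ·
          subst hx2
          exact core_2 h hac (rl_ne h F1).symm hx1 hbd (cl_ne h F5).symm hy2 hy1 (cl_ne h F7).symm (fun e => F8n (e ▸ F5)) F1 ((rl_total h (Ne.symm hx1) d).resolve_left F2n) F3 F5 ((cl_total h (Ne.symm hy1) c).resolve_left F6n) F7 ((cl_total h (Ne.symm hy2) a).resolve_left F8n)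
    ·
      by_cases hy1 : d = y1
      ·
        by_cases hy2 : b = y2
        ·
          subst hy1
          subst hy2
          exact core_10 h hac (rl_ne h F1).symm hx2 hx1 (rl_ne h F3).symm (fun e => F4n (e ▸ F1)) hbd F1 ((rl_total h (Ne.symm hx1) d).resolve_left F2n) F3 ((rl_total h (Ne.symm hx2) b).resolve_left F4n) F5 F7
        ·
          subst hy1
          exact core_3 h hac (rl_ne h F1).symm hx2 hx1 (rl_ne h F3).symm (fun e => F4n (e ▸ F1)) hbd hy2 (cl_ne h F7).symm F1 ((rl_total h (Ne.symm hx1) d).resolve_left F2n) F3 ((rl_total h (Ne.symm hx2) b).resolve_left F4n) F5 F7 ((cl_total h (Ne.symm hy2) a).resolve_left F8n)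
      ·
        by_cases hy2 : b = y2
        ·
          subst hy2
          exact core_4 h hac (rl_ne h F1).symm hx2 hx1 (rl_ne h F3).symm (fun e => F4n (e ▸ F1)) hbd (cl_ne h F5).symm hy1 F1 ((rl_total h (Ne.symm hx1) d).resolve_left F2n) F3 ((rl_total h (Ne.symm hx2) b).resolve_left F4n) F5 ((cl_total h (Ne.symm hy1) c).resolve_left F6n) F7
        ·
          exact core_0 h hac (rl_ne h F1).symm hx2 hx1 (rl_ne h F3).symm (fun e => F4n (e ▸ F1)) hbd (cl_ne h F5).symm hy2 hy1 (cl_ne h F7).symm (fun e => F8n (e ▸ F5)) F1 ((rl_total h (Ne.symm hx1) d).resolve_left F2n) F3 ((rl_total h (Ne.symm hx2) b).resolve_left F4n) F5 ((cl_total h (Ne.symm hy1) c).resolve_left F6n) F7 ((cl_total h (Ne.symm hy2) a).resolve_left F8n)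

end

end GridOrientation

/-- `L = 1 + ⌊log₂ min (|X|-1) (|Y|-1)⌋`, the number of milestones. -/
def gridL (X Y : Type) [Fintype X] [Fintype Y] : ℕ :=
  1 + Nat.log 2 (min (Fintype.card X - 1) (Fintype.card Y - 1))

/-- The `n`-th harmonic number, as a real number. -/
noncomputable def harmonicR (n : ℕ) : ℝ := ∑ k ∈ Finset.range n, 1 / (k + 1)

/-- In a grid USO, if `u` has refined out-degree
`(2^(i-1), 2^(i-1))` and `w` has refined out-degree `(2^i, 2^i)` (with `i ≥ 1`),
then `|Φ(u) ∪ Φ(w)| ≤ 5 · 2^(i-1)`. -/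
theorem card_union_outmaps_le
    {X Y : Type} [Fintype X] [Fintype Y] [DecidableEq X] [DecidableEq Y]
    (hX : 2 ≤ Fintype.card X) (hY : 2 ≤ Fintype.card Y)
    (o : GridOrientation X Y) (huso : o.IsUSO)
    (i : ℕ) (hi : 1 ≤ i) (u w : X × Y)
    (hu : (o.phiX u).card = 2 ^ (i - 1) ∧ (o.phiY u).card = 2 ^ (i - 1))
    (hw : (o.phiX w).card = 2 ^ i ∧ (o.phiY w).card = 2 ^ i) :
    (o.phi u ∪ o.phi w).card ≤ 5 * 2 ^ (i - 1) := by
  obtain ⟨hux, huy⟩ := hu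
  obtain ⟨hwx, hwy⟩ := hw
  have hpow : (2:ℕ) ^ i = 2 * 2 ^ (i - 1) := by
    conv_lhs => rw [show i = (i-1)+1 from (Nat.succ_pred_eq_of_pos hi).symm]
    rw [pow_succ]; ring
  have hkpos : 0 < (2:ℕ) ^ (i - 1) := Nat.pow_pos (by norm_num)
  have hsub : o.phiX u ⊆ o.phiX w ∨ o.phiY u ⊆ o.phiY w := by
    rcases GridOrientation.phi_subset_or huso u w with hh | hh | hh | hh
    · exact Or.inl hh
    · exact Or.inr hh
    · exfalso
      have := Finset.card_le_card hh
      rw [hux, hwx] at this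
      omega
    · exfalso
      have := Finset.card_le_card hh
      rw [huy, hwy] at this
      omega
  have hphi : o.phi u ∪ o.phi w
      = (o.phiX u ∪ o.phiX w).disjSum (o.phiY u ∪ o.phiY w) := by
    ext z
    cases z <;> simp [GridOrientation.phi]
  rw [hphi, Finset.card_disjSum]
  rcases hsub with hh | hh
  · rw [Finset.union_eq_right.mpr hh, hwx]
    have hY2 := Finset.card_union_le (o.phiY u) (o.phiY w)
    rw [huy, hwy] at hY2
    omega
  · rw [Finset.union_eq_right.mpr hh, hwy]
    have hX2 := Finset.card_union_le (o.phiX u) (o.phiX w)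
    rw [hux, hwx] at hX2
    omega
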